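/- If an N×N unitary U satisfies |tr(U Uᵀ)| ≥ N(1−δ), then there exists a real orthogonal N×N matrix V such that D(U, V) ≤ √δ. -/

import Mathlib

open Matrix

/-- Frobenius (Hilbert–Schmidt) norm `‖A‖ = √tr(A†A)`. -/
noncomputable def fnorm {ι : Type*} [Fintype ι] (A : Matrix ι ι ℂ) : ℝ :=
  Real.sqrt (Matrix.trace (Aᴴ * A)).re

/-- Phase-optimized normalized Frobenius distance
`D(A,B) = min_{θ∈[0,2π)} (1/√(2N)) ‖e^{iθ}A − B‖`. -/
noncomputable def uDist {ι : Type*} [Fintype ι] (A B : Matrix ι ι ℂ) : ℝ :=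
  sInf ((fun θ : ℝ => (Real.sqrt (2 * Fintype.card ι))⁻¹ *
    fnorm (Complex.exp (θ * Complex.I) • A - B)) '' Set.Ico 0 (2 * Real.pi))

open Finset in
open scoped RealInnerProductSpace in
lemma exists_orthogonal_real (M : Matrix (Fin N) (Fin N) ℝ)
    (hM : (1 - Mᵀ * M).PosSemidef) :
    ∃ V : Matrix (Fin N) (Fin N) ℝ, Vᵀ * V = 1 ∧
      Matrix.trace (Mᵀ * M) ≤ Matrix.trace (Vᵀ * M) := by
  classical
  have hA : (Mᵀ * M).PosSemidef := by
    simpa [Matrix.conjTranspose_eq_transpose_of_trivial] using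
      Matrix.posSemidef_conjTranspose_mul_self M
  have hH : (Mᵀ * M).IsHermitian := hA.1
  set μ : Fin N → ℝ := hH.eigenvalues with hμdef
  set P : Matrix (Fin N) (Fin N) ℝ := (hH.eigenvectorUnitary : Matrix (Fin N) (Fin N) ℝ)
    with hPdef
  have hPmem := (hH.eigenvectorUnitary).2
  have hPtP : Pᵀ * P = 1 := by
    have := hPmem.1
    simpa [Matrix.star_eq_conjTranspose, Matrix.conjTranspose_eq_transpose_of_trivial] using this
  have hPPt : P * Pᵀ = 1 := by
    have := hPmem.2
    simpa [Matrix.star_eq_conjTranspose, Matrix.conjTranspose_eq_transpose_of_trivial] using this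
  have hdiag : Pᵀ * (Mᵀ * M) * P = Matrix.diagonal μ := by
    have := hH.conjStarAlgAut_star_eigenvectorUnitary
    simpa [Unitary.conjStarAlgAut_apply, Matrix.star_eq_conjTranspose, Matrix.conjTranspose_eq_transpose_of_trivial,
      Function.comp] using this
  have hμ0 : ∀ i, 0 ≤ μ i := fun i => hA.eigenvalues_nonneg i
  -- eigenvalues at most 1
  have hμ1 : ∀ i, μ i ≤ 1 := by
    intro i
    have hv := hH.mulVec_eigenvectorBasis i
    set v : Fin N → ℝ := ⇑(hH.eigenvectorBasis i) with hvdef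
    have hnorm : ∑ r, v r * v r = 1 := by
      have h1 : ‖hH.eigenvectorBasis i‖ = 1 := hH.eigenvectorBasis.orthonormal.1 i
      have h2 : (inner ℝ (hH.eigenvectorBasis i) (hH.eigenvectorBasis i) : ℝ) = 1 := by
        rw [real_inner_self_eq_norm_sq, h1]; norm_num
      rw [PiLp.inner_apply] at h2
      simpa [hvdef, pow_two] using h2
    have hpos := hM.dotProduct_mulVec_nonneg v
    have hmv : (1 - Mᵀ * M) *ᵥ v = (1 - μ i) • v := by
      rw [Matrix.sub_mulVec, hv, Matrix.one_mulVec]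
      funext r
      simp only [Pi.sub_apply, Pi.smul_apply, smul_eq_mul]
      ring
    rw [hmv] at hpos
    have : dotProduct (star v) ((1 - μ i) • v) = (1 - μ i) * ∑ r, v r * v r := by
      simp [dotProduct, Finset.mul_sum, smul_eq_mul]
      ring_nf
      congr 1
      funext r
      ring
    rw [this, hnorm, mul_one] at hpos
    linarith
  set s : Fin N → ℝ := fun i => Real.sqrt (μ i) with hsdef
  have hs0 : ∀ i, 0 ≤ s i := fun i => Real.sqrt_nonneg _
  have hs1 : ∀ i, s i ≤ 1 := fun i => by
    rw [hsdef]
    simpa using Real.sqrt_le_sqrt (hμ1 i)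
  have hssq : ∀ i, s i * s i = μ i := fun i => Real.mul_self_sqrt (hμ0 i)
  set p : Fin N → Prop := fun i => μ i = 0 with hpdef
  set G : Matrix (Fin N) (Fin N) ℝ := Matrix.diagonal (fun i => if p i then 0 else (s i)⁻¹)
    with hGdef
  set E' : Matrix (Fin N) (Fin N) ℝ := Matrix.diagonal (fun i => if p i then 0 else 1)
    with hE'def
  set E : Matrix (Fin N) (Fin N) ℝ := Matrix.diagonal (fun i => if p i then 1 else 0)
    with hEdef
  set X : Matrix (Fin N) (Fin N) ℝ := M * P * G with hXdef
  have hsne : ∀ i, ¬ p i → s i ≠ 0 := by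
    intro i hi
    simp only [hpdef] at hi
    have : 0 < μ i := lt_of_le_of_ne (hμ0 i) (Ne.symm hi)
    exact ne_of_gt (Real.sqrt_pos.mpr this)
  have hGt : Gᵀ = G := by rw [hGdef, Matrix.diagonal_transpose]
  have hXtX : Xᵀ * X = E' := by
    have h1 : Xᵀ * X = G * (Pᵀ * (Mᵀ * M) * P) * G := by
      rw [hXdef]
      simp only [Matrix.transpose_mul, hGt]
      noncomm_ring
    rw [h1, hdiag, hGdef, hE'def]
    simp only [Matrix.diagonal_mul_diagonal]
    refine congrArg Matrix.diagonal (funext fun i => ?_)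
    by_cases hi : p i
    · simp only [if_pos hi]; ring
    · simp only [if_neg hi]
      rw [show (s i)⁻¹ * μ i * (s i)⁻¹ = μ i / (s i * s i) by ring, hssq i,
        div_self (fun h => hi h)]
  have hMPE : M * P * E = 0 := by
    have h1 : (M * P * E)ᵀ * (M * P * E) = E * (Pᵀ * (Mᵀ * M) * P) * E := by
      simp only [Matrix.transpose_mul, Matrix.diagonal_transpose, hEdef]
      noncomm_ring
    rw [hdiag] at h1
    have h2 : (M * P * E)ᵀ * (M * P * E) = 0 := by
      rw [h1, hEdef]
      simp only [Matrix.diagonal_mul_diagonal]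
      have : (fun i => (if p i then (1:ℝ) else 0) * μ i * (if p i then 1 else 0))
          = fun _ => (0:ℝ) := by
        funext i
        by_cases hi : p i
        · have hz : μ i = 0 := hi
          simp only [if_pos hi, hz]; ring
        · simp only [if_neg hi]; ring
      rw [this, Matrix.diagonal_zero]
    have := Matrix.conjTranspose_mul_self_eq_zero (A := M * P * E)
    rw [Matrix.conjTranspose_eq_transpose_of_trivial] at this
    exact this.mp h2
  have hE'E : E' + E = 1 := by
    rw [hE'def, hEdef, Matrix.diagonal_add]
    have : (fun i => (if p i then (0:ℝ) else 1) + (if p i then 1 else 0))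
        = fun _ => (1:ℝ) := by
      funext i
      by_cases hi : p i
      · simp only [if_pos hi]; ring
      · simp only [if_neg hi]; ring
    rw [this, Matrix.diagonal_one]
  have hMP : M * P = X * Matrix.diagonal s := by
    have h1 : G * Matrix.diagonal s = E' := by
      rw [hGdef, hE'def, Matrix.diagonal_mul_diagonal]
      refine congrArg Matrix.diagonal (funext fun i => ?_)
      by_cases hi : p i
      · simp only [if_pos hi]; ring
      · simp only [if_neg hi]; exact inv_mul_cancel₀ (hsne i hi)
    calc M * P = M * P * 1 := by rw [mul_one]
      _ = M * P * (E' + E) := by rw [hE'E]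
      _ = M * P * E' + M * P * E := by rw [mul_add]
      _ = M * P * E' := by rw [hMPE, add_zero]
      _ = M * P * (G * Matrix.diagonal s) := by rw [h1]
      _ = X * Matrix.diagonal s := by rw [hXdef]; noncomm_ring
  -- columns of X as vectors in Euclidean space
  set col : Fin N → EuclideanSpace ℝ (Fin N) :=
    fun i => (WithLp.equiv 2 _).symm (fun r => X r i) with hcoldef
  have hcol_inner : ∀ i j, (inner ℝ (col i) (col j) : ℝ) = (Xᵀ * X) i j := by
    intro i j
    rw [PiLp.inner_apply, Matrix.mul_apply]
    simp [hcoldef, Matrix.transpose_apply, RCLike.inner_apply, mul_comm]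
  have hcol_zero : ∀ i, p i → col i = 0 := by
    intro i hi
    have h0 : (inner ℝ (col i) (col i) : ℝ) = 0 := by
      rw [hcol_inner, hXtX, hE'def, Matrix.diagonal_apply_eq, if_pos hi]
    exact inner_self_eq_zero.mp h0
  have hvon : Orthonormal ℝ (fun (i : {i // ¬ p i}) => col i) := by
    rw [orthonormal_iff_ite]
    intro a b
    rw [hcol_inner, hXtX, hE'def]
    rcases eq_or_ne a b with rfl | hab
    · simp [Matrix.diagonal_apply_eq, if_neg a.2]
    · have hne : (a : Fin N) ≠ (b : Fin N) := fun h => hab (Subtype.ext h)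
      rw [Matrix.diagonal_apply_ne _ hne, if_neg hab]
  set R : Submodule ℝ (EuclideanSpace ℝ (Fin N)) :=
    Submodule.span ℝ (Set.range (fun (i : {i // ¬ p i}) => col i)) with hRdef
  have hcol_mem : ∀ i, col i ∈ R := by
    intro i
    by_cases hi : p i
    · rw [hcol_zero i hi]; exact R.zero_mem
    · exact Submodule.subset_span ⟨⟨i, hi⟩, rfl⟩
  have hfinR : Module.finrank ℝ R = Fintype.card {i // ¬ p i} :=
    finrank_span_eq_card hvon.linearIndependent
  have hfinW : Module.finrank ℝ (Rᗮ : Submodule ℝ (EuclideanSpace ℝ (Fin N)))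
      = Fintype.card {i // p i} := by
    have h1 := Submodule.finrank_add_finrank_orthogonal (K := R)
    have h2 : Module.finrank ℝ (EuclideanSpace ℝ (Fin N)) = N := finrank_euclideanSpace_fin
    have h3 : Fintype.card {i // ¬ p i} = N - Fintype.card {i // p i} := by
      simpa using Fintype.card_subtype_compl p
    have h4 : Fintype.card {i // p i} ≤ N := by
      simpa using Fintype.card_subtype_le p
    omega
  set b := stdOrthonormalBasis ℝ (Rᗮ : Submodule ℝ (EuclideanSpace ℝ (Fin N))) with hbdef
  set eqv : {i // p i} ≃ Fin (Module.finrank ℝ (Rᗮ : Submodule ℝ (EuclideanSpace ℝ (Fin N)))) :=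
    Fintype.equivFinOfCardEq hfinW.symm with heqvdef
  set Y : Matrix (Fin N) (Fin N) ℝ :=
    Matrix.of (fun r i => if h : p i then ((b (eqv ⟨i, h⟩) : EuclideanSpace ℝ (Fin N)) : Fin N → ℝ) r else 0)
    with hYdef
  have hYcol : ∀ j (h : p j) (r : Fin N),
      Y r j = ((b (eqv ⟨j, h⟩) : EuclideanSpace ℝ (Fin N)) : Fin N → ℝ) r := by
    intro j h r
    simp [hYdef, dif_pos h]
  have hYcol0 : ∀ j, ¬ p j → ∀ r, Y r j = 0 := by
    intro j h r
    simp [hYdef, dif_neg h]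
  have hYtY : Yᵀ * Y = E := by
    ext i j
    rw [Matrix.mul_apply, hEdef]
    by_cases hi : p i
    · by_cases hj : p j
      · have hsum : ∑ r, Yᵀ i r * Y r j
            = (inner ℝ ((b (eqv ⟨i, hi⟩) : EuclideanSpace ℝ (Fin N)))
                ((b (eqv ⟨j, hj⟩) : EuclideanSpace ℝ (Fin N))) : ℝ) := by
          rw [PiLp.inner_apply]
          refine Finset.sum_congr rfl (fun r _ => ?_)
          rw [Matrix.transpose_apply, hYcol i hi r, hYcol j hj r]
          simp [RCLike.inner_apply]
          ring
        rw [hsum, ← Submodule.coe_inner]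
        rw [orthonormal_iff_ite.mp b.orthonormal]
        have hiff : (eqv ⟨i, hi⟩ = eqv ⟨j, hj⟩) ↔ i = j := by
          rw [Equiv.apply_eq_iff_eq, Subtype.mk_eq_mk]
        by_cases hij : i = j
        · rw [if_pos (hiff.mpr hij), Matrix.diagonal_apply, if_pos hij, if_pos hi]
        · rw [if_neg (fun h => hij (hiff.mp h)), Matrix.diagonal_apply, if_neg hij]
      · have : ∀ r, Yᵀ i r * Y r j = 0 := fun r => by
          rw [Matrix.transpose_apply, hYcol0 j hj r, mul_zero]
        rw [Finset.sum_congr rfl (fun r _ => this r), Finset.sum_const_zero,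
          Matrix.diagonal_apply]
        by_cases hij : i = j
        · subst hij; exact absurd hi hj
        · rw [if_neg hij]
    · have : ∀ r, Yᵀ i r * Y r j = 0 := fun r => by
        rw [Matrix.transpose_apply, hYcol0 i hi r, zero_mul]
      rw [Finset.sum_congr rfl (fun r _ => this r), Finset.sum_const_zero,
        Matrix.diagonal_apply]
      by_cases hij : i = j
      · subst hij; rw [if_pos rfl, if_neg hi]
      · rw [if_neg hij]
  have hXtY : Xᵀ * Y = 0 := by
    ext i j
    rw [Matrix.mul_apply]
    by_cases hj : p j
    · have hsum : ∑ r, Xᵀ i r * Y r j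
          = (inner ℝ (col i) ((b (eqv ⟨j, hj⟩) : EuclideanSpace ℝ (Fin N)) : EuclideanSpace ℝ (Fin N)) : ℝ) := by
        rw [PiLp.inner_apply]
        refine Finset.sum_congr rfl (fun r _ => ?_)
        rw [Matrix.transpose_apply, hYcol j hj r]
        simp [hcoldef, RCLike.inner_apply]
        ring
      rw [hsum, Submodule.inner_right_of_mem_orthogonal (hcol_mem i) (b (eqv ⟨j, hj⟩)).2]
      rfl
    · have : ∀ r, Xᵀ i r * Y r j = 0 := fun r => by
        rw [hYcol0 j hj r, mul_zero]
      rw [Finset.sum_congr rfl (fun r _ => this r), Finset.sum_const_zero]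
      rfl
  have hYtX : Yᵀ * X = 0 := by
    have : Yᵀ * X = (Xᵀ * Y)ᵀ := by
      rw [Matrix.transpose_mul, Matrix.transpose_transpose]
    rw [this, hXtY, Matrix.transpose_zero]
  have ht : ((X + Y) * Pᵀ)ᵀ = P * (X + Y)ᵀ := by
    rw [Matrix.transpose_mul, Matrix.transpose_transpose]
  refine ⟨(X + Y) * Pᵀ, ?_, ?_⟩
  · rw [ht]
    calc P * (X + Y)ᵀ * ((X + Y) * Pᵀ) = P * ((X + Y)ᵀ * (X + Y)) * Pᵀ := by noncomm_ring
      _ = P * (E' + E) * Pᵀ := by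
          simp only [Matrix.transpose_add, Matrix.add_mul, Matrix.mul_add,
            hXtX, hXtY, hYtX, hYtY]
          noncomm_ring
      _ = 1 := by rw [hE'E, mul_one, hPPt]
  · have htr1 : Matrix.trace (Mᵀ * M) = ∑ i, μ i := by
      have e1 : Matrix.trace (Pᵀ * (Mᵀ * M) * P) = Matrix.trace (Mᵀ * M) := by
        rw [Matrix.trace_mul_comm, ← mul_assoc, hPPt, one_mul]
      rw [← e1, hdiag, Matrix.trace_diagonal]
    have htr2 : Matrix.trace (((X + Y) * Pᵀ)ᵀ * M) = ∑ i, s i := by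
      rw [ht]
      have e1 : P * (X + Y)ᵀ * M = P * ((X + Y)ᵀ * M) := by rw [mul_assoc]
      rw [e1, Matrix.trace_mul_comm]
      -- trace ((X + Y)ᵀ * M * P)
      have e2 : (X + Y)ᵀ * M * P = (X + Y)ᵀ * (X * Matrix.diagonal s) := by
        rw [mul_assoc, ← hMP]
      rw [e2]
      have e3 : (X + Y)ᵀ * (X * Matrix.diagonal s)
          = E' * Matrix.diagonal s := by
        simp only [Matrix.transpose_add, Matrix.add_mul]
        rw [show Xᵀ * (X * Matrix.diagonal s) = Xᵀ * X * Matrix.diagonal s from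
            (mul_assoc _ _ _).symm,
          show Yᵀ * (X * Matrix.diagonal s) = Yᵀ * X * Matrix.diagonal s from
            (mul_assoc _ _ _).symm,
          hXtX, hYtX, Matrix.zero_mul, add_zero]
      rw [e3, hE'def, Matrix.diagonal_mul_diagonal, Matrix.trace_diagonal]
      refine Finset.sum_congr rfl (fun i _ => ?_)
      by_cases hi : p i
      · have hz : μ i = 0 := hi
        rw [if_pos hi, zero_mul, hsdef]
        simp [hz]
      · rw [if_neg hi, one_mul]
    rw [htr1, htr2]
    refine Finset.sum_le_sum (fun i _ => ?_)
    nlinarith [hs0 i, hs1 i, hssq i]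

lemma uDist_le {N : ℕ} {δ : ℝ} (hδ0 : 0 ≤ δ)
    (U V : Matrix (Fin N) (Fin N) ℂ)
    (hU : Uᴴ * U = 1) (hV : Vᴴ * V = 1)
    (h : (N : ℝ) * (1 - δ) ≤ ‖Matrix.trace (Vᴴ * U)‖) :
    uDist U V ≤ Real.sqrt δ := by
  classical
  set c : ℂ := Matrix.trace (Vᴴ * U) with hc
  set θ : ℝ := if 0 < c.arg then 2 * Real.pi - c.arg else - c.arg with hθ
  have hθmem : θ ∈ Set.Ico (0:ℝ) (2 * Real.pi) := by
    have h1 := Complex.arg_le_pi c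
    have h2 := Complex.neg_pi_lt_arg c
    have hpi := Real.pi_pos
    constructor <;> rw [hθ] <;> split <;> nlinarith
  have hexp : Complex.exp (θ * Complex.I) * c = ‖c‖ := by
    have : Complex.exp (θ * Complex.I) = Complex.exp (-(c.arg) * Complex.I) := by
      rw [hθ]
      split
      · rw [show ((2 * Real.pi - c.arg : ℝ) : ℂ) * Complex.I
            = (2 * Real.pi) * Complex.I + (-(c.arg) * Complex.I) by push_cast; ring,
          Complex.exp_add]
        simp [Complex.exp_two_pi_mul_I]
      · norm_num
    rw [this]
    nth_rewrite 2 [← Complex.norm_mul_exp_arg_mul_I c]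
    rw [mul_left_comm, ← Complex.exp_add]
    norm_num
  -- the value of the function at θ
  have hBdd : BddBelow ((fun θ : ℝ => (Real.sqrt (2 * Fintype.card (Fin N)))⁻¹ *
      fnorm (Complex.exp (θ * Complex.I) • U - V)) '' Set.Ico 0 (2 * Real.pi)) := by
    refine ⟨0, fun x hx => ?_⟩
    obtain ⟨t, _, rfl⟩ := hx
    have h1 : (0:ℝ) ≤ (Real.sqrt (2 * Fintype.card (Fin N)))⁻¹ := by positivity
    have h2 : (0:ℝ) ≤ fnorm (Complex.exp (t * Complex.I) • U - V) := Real.sqrt_nonneg _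
    positivity
  have hle : uDist U V ≤ (Real.sqrt (2 * Fintype.card (Fin N)))⁻¹ *
      fnorm (Complex.exp (θ * Complex.I) • U - V) :=
    csInf_le hBdd ⟨θ, hθmem, rfl⟩
  refine hle.trans ?_
  -- compute fnorm
  set e : ℂ := Complex.exp (θ * Complex.I) with he
  have hee : (starRingEnd ℂ) e * e = 1 := by
    rw [he, ← Complex.exp_conj, ← Complex.exp_add]
    have : (starRingEnd ℂ) (↑θ * Complex.I) + ↑θ * Complex.I = 0 := by
      simp [Complex.conj_I]
    rw [this, Complex.exp_zero]
  have htr : Matrix.trace ((e • U - V)ᴴ * (e • U - V))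
      = (N : ℂ) + N - (starRingEnd ℂ) (e * c) - e * c := by
    have hUV : Matrix.trace (Uᴴ * V) = (starRingEnd ℂ) c := by
      rw [hc, show Uᴴ * V = (Vᴴ * U)ᴴ by rw [Matrix.conjTranspose_mul,
        Matrix.conjTranspose_conjTranspose], Matrix.trace_conjTranspose]
      rfl
    have htU : Matrix.trace (Uᴴ * U) = (N : ℂ) := by
      rw [hU, Matrix.trace_one]; simp
    have htV : Matrix.trace (Vᴴ * V) = (N : ℂ) := by
      rw [hV, Matrix.trace_one]; simp
    simp only [Matrix.conjTranspose_sub, Matrix.conjTranspose_smul, Matrix.sub_mul,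
      Matrix.mul_sub, Matrix.smul_mul, Matrix.mul_smul, Matrix.trace_sub, Matrix.trace_smul,
      smul_smul, smul_eq_mul]
    rw [htU, htV, hUV]
    simp only [starRingEnd_apply] at hee ⊢
    rw [star_mul']
    linear_combination (N : ℂ) * hee
  have habs : e * c = (‖c‖ : ℂ) := hexp
  have hre : (Matrix.trace ((e • U - V)ᴴ * (e • U - V))).re
      = 2 * N - 2 * ‖c‖ := by
    rw [htr, habs]
    simp [Complex.sub_re]
    ring
  have hfn : fnorm (e • U - V) ≤ Real.sqrt (2 * N * δ) := by
    rw [fnorm, hre]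
    apply Real.sqrt_le_sqrt
    nlinarith
  calc (Real.sqrt (2 * Fintype.card (Fin N)))⁻¹ * fnorm (e • U - V)
      ≤ (Real.sqrt (2 * N))⁻¹ * Real.sqrt (2 * N * δ) := by
        rw [Fintype.card_fin]
        exact mul_le_mul_of_nonneg_left hfn (by positivity)
    _ ≤ Real.sqrt δ := by
        rcases Nat.eq_zero_or_pos N with hN | hN
        · subst hN; simp
        · have h2N : (0:ℝ) < 2 * N := by positivity
          rw [Real.sqrt_mul (le_of_lt h2N)]
          rw [inv_mul_cancel_left₀ (by positivity)]

/-- If |tr(UUᵀ)| ≥ N(1−δ) then U is √δ-close to a real orthogonal V. -/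
theorem close_to_orthogonal {N : ℕ} {δ : ℝ}
    (hδ0 : 0 ≤ δ) (hδ1 : δ ≤ 1)
    (U : Matrix (Fin N) (Fin N) ℂ)
    (hU : U ∈ Matrix.unitaryGroup (Fin N) ℂ)
    (htr : (N : ℝ) * (1 - δ) ≤ ‖Matrix.trace (U * Uᵀ)‖) :
    ∃ V : Matrix (Fin N) (Fin N) ℂ,
      (∀ i j, (V i j).im = 0) ∧ Vᵀ * V = 1 ∧ V * Vᵀ = 1 ∧
      uDist U V ≤ Real.sqrt δ := by
  classical
  have hU1 : Uᴴ * U = 1 := by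
    have := hU.1
    rwa [Matrix.star_eq_conjTranspose] at this
  set t : ℂ := Matrix.trace (U * Uᵀ) with htdef
  set z : ℂ := Complex.exp ((-(t.arg / 2) : ℝ) * Complex.I) with hzdef
  have hzz : (starRingEnd ℂ) z * z = 1 := by
    rw [hzdef, ← Complex.exp_conj, ← Complex.exp_add]
    have h0 : (starRingEnd ℂ) (((-(t.arg / 2) : ℝ)) * Complex.I)
        + ((-(t.arg / 2) : ℝ)) * Complex.I = 0 := by
      rw [_root_.map_mul, Complex.conj_ofReal, Complex.conj_I]
      ring
    rw [h0, Complex.exp_zero]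
  have hzabs : ‖z‖ = 1 := by
    rw [hzdef]; exact Complex.norm_exp_ofReal_mul_I _
  set U' : Matrix (Fin N) (Fin N) ℂ := z • U with hU'def
  have hU'1 : U'ᴴ * U' = 1 := by
    rw [hU'def, Matrix.conjTranspose_smul, Matrix.smul_mul, Matrix.mul_smul, smul_smul, hU1]
    rw [show (star z : ℂ) = (starRingEnd ℂ) z from rfl, hzz, one_smul]
  have htrU' : Matrix.trace (U' * U'ᵀ) = (‖t‖ : ℂ) := by
    have h1 : U' * U'ᵀ = (z * z) • (U * Uᵀ) := by
      rw [hU'def, Matrix.transpose_smul, Matrix.smul_mul, Matrix.mul_smul, smul_smul]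
    rw [h1, Matrix.trace_smul, smul_eq_mul, ← htdef]
    have h2 : z * z = Complex.exp ((-t.arg : ℂ) * Complex.I) := by
      rw [hzdef, ← Complex.exp_add]
      congr 1
      push_cast
      ring
    rw [h2]
    nth_rewrite 2 [← Complex.norm_mul_exp_arg_mul_I t]
    rw [mul_left_comm, ← Complex.exp_add]
    norm_num
  set M : Matrix (Fin N) (Fin N) ℝ := Matrix.of (fun i j => (U' i j).re) with hMdef
  -- norm preservation for the complexification
  have hkey : ∀ x : Fin N → ℝ,
      (∑ i, ((U' *ᵥ (fun j => (x j : ℂ))) i).re ^ 2) ≤ ∑ i, x i * x i ∧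
      (M *ᵥ x) = fun i => ((U' *ᵥ (fun j => (x j : ℂ))) i).re := by
    intro x
    set xc : Fin N → ℂ := fun j => (x j : ℂ) with hxcdef
    have hnormsum : ∑ i, Complex.normSq ((U' *ᵥ xc) i) = ∑ i, x i * x i := by
      have h1 : star (U' *ᵥ xc) ⬝ᵥ (U' *ᵥ xc) = star xc ⬝ᵥ xc := by
        rw [Matrix.star_mulVec, Matrix.dotProduct_mulVec, Matrix.vecMul_vecMul, hU'1,
          Matrix.vecMul_one]
      have h2 : star (U' *ᵥ xc) ⬝ᵥ (U' *ᵥ xc)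
          = ((∑ i, Complex.normSq ((U' *ᵥ xc) i) : ℝ) : ℂ) := by
        simp only [dotProduct, Pi.star_apply]
        push_cast
        refine Finset.sum_congr rfl (fun i _ => ?_)
        rw [mul_comm]
        simpa using Complex.mul_conj ((U' *ᵥ xc) i)
      have h3 : star xc ⬝ᵥ xc = ((∑ i, x i * x i : ℝ) : ℂ) := by
        simp only [dotProduct, Pi.star_apply, hxcdef]
        push_cast
        refine Finset.sum_congr rfl (fun i _ => ?_)
        simp
      rw [h2, h3] at h1
      exact_mod_cast h1
    constructor
    · rw [← hnormsum]
      refine Finset.sum_le_sum (fun i _ => ?_)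
      rw [Complex.normSq_apply]
      nlinarith [sq_nonneg ((U' *ᵥ xc) i).im]
    · funext i
      simp only [Matrix.mulVec, dotProduct, hMdef, Matrix.of_apply, hxcdef]
      rw [Complex.re_sum]
      refine Finset.sum_congr rfl (fun j _ => ?_)
      rw [Complex.mul_re]
      simp
  have hM1 : (1 - Mᵀ * M).PosSemidef := by
    refine Matrix.PosSemidef.of_dotProduct_mulVec_nonneg ?_ ?_
    · have h1 : (Mᵀ * M).IsHermitian := by
        have := Matrix.isHermitian_conjTranspose_mul_self M
        rwa [Matrix.conjTranspose_eq_transpose_of_trivial] at this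
      exact Matrix.IsHermitian.sub Matrix.isHermitian_one h1
    · intro x
      obtain ⟨hle, heq⟩ := hkey x
      have h1 : star x ⬝ᵥ ((1 - Mᵀ * M) *ᵥ x) = x ⬝ᵥ x - (M *ᵥ x) ⬝ᵥ (M *ᵥ x) := by
        rw [star_trivial, Matrix.sub_mulVec, dotProduct_sub, Matrix.one_mulVec]
        congr 1
        rw [← Matrix.mulVec_mulVec, Matrix.dotProduct_mulVec, Matrix.vecMul_transpose]
      rw [h1]
      have h2 : (M *ᵥ x) ⬝ᵥ (M *ᵥ x) = ∑ i, ((U' *ᵥ (fun j => (x j : ℂ))) i).re ^ 2 := by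
        rw [heq]
        simp [dotProduct, pow_two]
      rw [h2]
      have h3 : x ⬝ᵥ x = ∑ i, x i * x i := rfl
      rw [h3]
      linarith
  have htrM : Matrix.trace (Mᵀ * M) = ((N : ℝ) + ‖t‖) / 2 := by
    have h1 : Matrix.trace (Mᵀ * M) = ∑ j, ∑ i, (U' i j).re * (U' i j).re := by
      simp only [Matrix.trace, Matrix.diag, Matrix.mul_apply, Matrix.transpose_apply, hMdef,
        Matrix.of_apply]
    have h2 : Matrix.trace (U'ᴴ * U') = ((N : ℝ) : ℂ) := by
      rw [hU'1, Matrix.trace_one]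
      simp
    have h3 : ∑ j, ∑ i, Complex.normSq (U' i j) = (N : ℝ) := by
      have e1 : ((N : ℝ) : ℂ) = ∑ j, ∑ i, ((Complex.normSq (U' i j) : ℝ) : ℂ) := by
        rw [← h2]
        simp only [Matrix.trace, Matrix.diag, Matrix.mul_apply, Matrix.conjTranspose_apply]
        refine Finset.sum_congr rfl (fun j _ => Finset.sum_congr rfl (fun i _ => ?_))
        rw [show star (U' i j) = (starRingEnd ℂ) (U' i j) from rfl, mul_comm,
          Complex.mul_conj]
      exact_mod_cast e1.symm
    have h4 : ∑ j, ∑ i, (U' i j * U' i j).re = ‖t‖ := by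
      have e1 : Matrix.trace (U'ᵀ * U') = ∑ j, ∑ i, (U' i j * U' i j) := by
        simp only [Matrix.trace, Matrix.diag, Matrix.mul_apply, Matrix.transpose_apply]
      have e2 : Matrix.trace (U'ᵀ * U') = (‖t‖ : ℂ) := by
        rw [Matrix.trace_mul_comm, htrU']
      rw [e2] at e1
      have e3 := congrArg Complex.re e1
      rw [Complex.re_sum] at e3
      simp only [Complex.ofReal_re] at e3
      rw [e3]
      exact Finset.sum_congr rfl (fun j _ => by rw [Complex.re_sum])
    have hpoint : ∀ u : ℂ, u.re * u.re = (Complex.normSq u + (u * u).re) / 2 := by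
      intro u
      rw [Complex.normSq_apply, Complex.mul_re]
      ring
    rw [h1,
      Finset.sum_congr rfl (fun j _ => Finset.sum_congr rfl (fun i _ => hpoint (U' i j)))]
    simp only [← Finset.sum_div, Finset.sum_add_distrib]
    rw [h3, h4]
  -- get the real orthogonal matrix
  obtain ⟨Vr, hVr1, hVrtr⟩ := exists_orthogonal_real M hM1
  set Vc : Matrix (Fin N) (Fin N) ℂ := Vr.map (fun a => (a : ℂ)) with hVcdef
  have hVcim : ∀ i j, (Vc i j).im = 0 := by
    intro i j
    simp [hVcdef]
  have hmap : ∀ A B : Matrix (Fin N) (Fin N) ℝ,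
      (A * B).map (fun a => (a : ℂ)) = A.map (fun a => (a : ℂ)) * B.map (fun a => (a : ℂ)) := by
    intro A B
    exact Matrix.map_mul (f := Complex.ofRealHom)
  have hVct : Vcᵀ * Vc = 1 := by
    rw [hVcdef, ← Matrix.transpose_map, ← hmap, hVr1]
    simp [Matrix.map_one]
  have hVctc : Vcᴴ = Vcᵀ := by
    ext i j
    rw [Matrix.conjTranspose_apply, Matrix.transpose_apply, hVcdef]
    simp only [Matrix.map_apply]
    exact Complex.conj_ofReal _
  have hVc1 : Vcᴴ * Vc = 1 := by rw [hVctc, hVct]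
  have hVcVct : Vc * Vcᵀ = 1 := mul_eq_one_comm.mp hVct
  -- trace comparison
  have htrace_re : (Matrix.trace (Vcᵀ * U')).re = Matrix.trace (Vrᵀ * M) := by
    simp only [Matrix.trace, Matrix.diag, Matrix.mul_apply, Matrix.transpose_apply,
      hVcdef, hMdef, Matrix.map_apply, Matrix.of_apply]
    rw [Complex.re_sum]
    refine Finset.sum_congr rfl (fun j _ => ?_)
    rw [Complex.re_sum]
    refine Finset.sum_congr rfl (fun i _ => ?_)
    rw [Complex.mul_re]
    simp
  have htrace_eq : Matrix.trace (Vcᵀ * U') = z * Matrix.trace (Vcᵀ * U) := by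
    rw [hU'def, Matrix.mul_smul, Matrix.trace_smul, smul_eq_mul]
  have hbound : (N : ℝ) * (1 - δ) ≤ ‖Matrix.trace (Vcᴴ * U)‖ := by
    have h1 : Matrix.trace (Mᵀ * M) ≥ (N : ℝ) * (1 - δ) := by
      rw [htrM]
      have hN : (N : ℝ) * (1 - δ) ≤ (N : ℝ) := by nlinarith [Nat.cast_nonneg (α := ℝ) N]
      linarith
    have h2 : (N : ℝ) * (1 - δ) ≤ (Matrix.trace (Vcᵀ * U')).re := by
      rw [htrace_re]; linarith
    have h3 : (Matrix.trace (Vcᵀ * U')).re ≤ ‖Matrix.trace (Vcᵀ * U')‖ :=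
      Complex.re_le_norm _
    have h4 : ‖Matrix.trace (Vcᵀ * U')‖ = ‖Matrix.trace (Vcᵀ * U)‖ := by
      rw [htrace_eq, norm_mul, hzabs, one_mul]
    rw [hVctc]
    calc (N : ℝ) * (1 - δ) ≤ (Matrix.trace (Vcᵀ * U')).re := h2
      _ ≤ ‖Matrix.trace (Vcᵀ * U')‖ := h3
      _ = ‖Matrix.trace (Vcᵀ * U)‖ := h4
  exact ⟨Vc, hVcim, hVct, hVcVct, uDist_le hδ0 U Vc hU1 hVc1 hbound⟩
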